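/- Let S = UΛUᵀ with UᵀU = I_m. For any ρ > 0, the p²×p² matrix 2⁻¹S⊗I_p + 2⁻¹I_p⊗S + ρI_{p²} is invertible with inverse equal to ρ⁻¹I_{p²} − ρ⁻¹(UΛ₂Uᵀ)⊗I_p − ρ⁻¹I_p⊗(UΛ₂Uᵀ) + ρ⁻¹(U⊗U)·diag{vec(Λ₃)}·(Uᵀ⊗Uᵀ); equivalently, the product of 2⁻¹S⊗I_p + 2⁻¹I_p⊗S + ρI_{p²} with this matrix (in either order) equals I_{p²}. -/

import Mathlib

open Matrix Kronecker

/-- With `S = U Λ Uᵀ`, `Uᵀ U = I_m`, and `ρ > 0`, the `p²×p²` matrix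
`2⁻¹ S⊗I + 2⁻¹ I⊗S + ρ I` is invertible with inverse
`ρ⁻¹ I − ρ⁻¹ (UΛ₂Uᵀ)⊗I − ρ⁻¹ I⊗(UΛ₂Uᵀ) + ρ⁻¹ (U⊗U) diag{vec(Λ₃)} (Uᵀ⊗Uᵀ)`;
equivalently, the products in both orders equal the identity. -/
theorem stmt_1 (p m : ℕ) (hp : 0 < p) (hm : 0 < m)
    (U : Matrix (Fin p) (Fin m) ℝ) (hU : Uᵀ * U = 1)
    (τ : Fin m → ℝ) (hτ : ∀ i, 0 ≤ τ i)
    (Λ : Matrix (Fin m) (Fin m) ℝ) (hΛ : Λ = Matrix.diagonal τ)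
    (S : Matrix (Fin p) (Fin p) ℝ) (hS : S = U * Λ * Uᵀ)
    (ρ : ℝ) (hρ : 0 < ρ)
    (Λ₂ : Matrix (Fin m) (Fin m) ℝ)
    (hΛ₂ : Λ₂ = Matrix.diagonal (fun i => τ i / (τ i + 2 * ρ)))
    (Λ₃ : Matrix (Fin m) (Fin m) ℝ)
    (hΛ₃ : Λ₃ = fun i j => τ i * τ j * (τ i + τ j + 4 * ρ) /
      ((τ i + 2 * ρ) * (τ j + 2 * ρ) * (τ i + τ j + 2 * ρ)))
    (T R : Matrix (Fin p × Fin p) (Fin p × Fin p) ℝ)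
    (hT : T = (2⁻¹ : ℝ) • (S ⊗ₖ (1 : Matrix (Fin p) (Fin p) ℝ))
      + (2⁻¹ : ℝ) • ((1 : Matrix (Fin p) (Fin p) ℝ) ⊗ₖ S)
      + ρ • (1 : Matrix (Fin p × Fin p) (Fin p × Fin p) ℝ))
    (hR : R = ρ⁻¹ • (1 : Matrix (Fin p × Fin p) (Fin p × Fin p) ℝ)
      - ρ⁻¹ • ((U * Λ₂ * Uᵀ) ⊗ₖ (1 : Matrix (Fin p) (Fin p) ℝ))
      - ρ⁻¹ • ((1 : Matrix (Fin p) (Fin p) ℝ) ⊗ₖ (U * Λ₂ * Uᵀ))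
      + ρ⁻¹ • ((U ⊗ₖ U)
          * Matrix.diagonal (fun q : Fin m × Fin m => Λ₃ q.1 q.2)
          * (Uᵀ ⊗ₖ Uᵀ))) :
    IsUnit T ∧ T⁻¹ = R ∧ T * R = 1 ∧ R * T = 1 := by
  have hρ' : ρ ≠ 0 := ne_of_gt hρ
  have hne : ∀ i, τ i + 2 * ρ ≠ 0 := fun i => by nlinarith [hτ i]
  have hne2 : ∀ i j : Fin m, τ i + τ j + 2 * ρ ≠ 0 := fun i j => by nlinarith [hτ i, hτ j]
  have key : T * R = 1 := by
    have hUU : ∀ A B : Matrix (Fin m) (Fin m) ℝ,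
        (U * A * Uᵀ) * (U * B * Uᵀ) = U * (A * B) * Uᵀ := by
      intro A B
      calc (U * A * Uᵀ) * (U * B * Uᵀ) = U * A * (Uᵀ * U) * B * Uᵀ := by
            simp only [Matrix.mul_assoc]
        _ = U * (A * B) * Uᵀ := by rw [hU]; simp only [Matrix.mul_one, Matrix.mul_assoc]
    -- Λ * Λ₂ + 2ρ Λ₂ = Λ
    have hdiag : Λ * Λ₂ + (2 * ρ) • Λ₂ = Λ := by
      rw [hΛ, hΛ₂, Matrix.diagonal_mul_diagonal, ← Matrix.diagonal_smul,
        Matrix.diagonal_add]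
      refine congrArg Matrix.diagonal (funext fun i => ?_)
      have hi := hne i
      simp only [Pi.add_apply, Pi.smul_apply, smul_eq_mul]
      field_simp
    have h2ρ : (2 * ρ) • (U * Λ₂ * Uᵀ) = U * ((2 * ρ) • Λ₂) * Uᵀ := by
      rw [Matrix.mul_smul, Matrix.smul_mul]
    have hSM : S = S * (U * Λ₂ * Uᵀ) + (2 * ρ) • (U * Λ₂ * Uᵀ) := by
      rw [hS, hUU, h2ρ, ← Matrix.add_mul, ← Matrix.mul_add, hdiag]
    have hSU : S * U = U * Λ := by
      rw [hS, Matrix.mul_assoc, Matrix.mul_assoc, hU, Matrix.mul_one]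
    have h1 : (S ⊗ₖ (1 : Matrix (Fin p) (Fin p) ℝ)) * (U ⊗ₖ U)
        = (U ⊗ₖ U) * (Λ ⊗ₖ (1 : Matrix (Fin m) (Fin m) ℝ)) := by
      simp only [← Matrix.mul_kronecker_mul, hSU, Matrix.one_mul, Matrix.mul_one]
    have h2 : ((1 : Matrix (Fin p) (Fin p) ℝ) ⊗ₖ S) * (U ⊗ₖ U)
        = (U ⊗ₖ U) * ((1 : Matrix (Fin m) (Fin m) ℝ) ⊗ₖ Λ) := by
      simp only [← Matrix.mul_kronecker_mul, hSU, Matrix.one_mul, Matrix.mul_one]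
    have hEalt : (2⁻¹ : ℝ) • (Λ ⊗ₖ (1 : Matrix (Fin m) (Fin m) ℝ))
        + (2⁻¹ : ℝ) • ((1 : Matrix (Fin m) (Fin m) ℝ) ⊗ₖ Λ)
        + ρ • (1 : Matrix (Fin m × Fin m) (Fin m × Fin m) ℝ)
        = Matrix.diagonal (fun q : Fin m × Fin m => 2⁻¹ * τ q.1 + 2⁻¹ * τ q.2 + ρ) := by
      have one_eq : (1 : Matrix (Fin m) (Fin m) ℝ) = Matrix.diagonal (fun _ => 1) := by
        rw [Matrix.diagonal_one]
      have one_eq2 : (1 : Matrix (Fin m × Fin m) (Fin m × Fin m) ℝ)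
          = Matrix.diagonal (fun _ => 1) := by rw [Matrix.diagonal_one]
      rw [hΛ, one_eq, one_eq2, Matrix.diagonal_kronecker_diagonal,
        Matrix.diagonal_kronecker_diagonal, ← Matrix.diagonal_smul, ← Matrix.diagonal_smul,
        ← Matrix.diagonal_smul, Matrix.diagonal_add, Matrix.diagonal_add]
      refine congrArg Matrix.diagonal (funext fun q => ?_)
      simp only [Pi.add_apply, Pi.smul_apply, smul_eq_mul]
      ring
    have hTK : T * (U ⊗ₖ U) = (U ⊗ₖ U)
        * Matrix.diagonal (fun q : Fin m × Fin m => 2⁻¹ * τ q.1 + 2⁻¹ * τ q.2 + ρ) := by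
      rw [hT, ← hEalt]
      simp only [Matrix.add_mul, Matrix.mul_add, Matrix.smul_mul, Matrix.mul_smul,
        Matrix.one_mul, Matrix.mul_one, h1, h2]
    have hED3 : Matrix.diagonal (fun q : Fin m × Fin m => 2⁻¹ * τ q.1 + 2⁻¹ * τ q.2 + ρ)
        * Matrix.diagonal (fun q : Fin m × Fin m => Λ₃ q.1 q.2)
        = (2⁻¹ : ℝ) • (Λ₂ ⊗ₖ Λ) + (2⁻¹ : ℝ) • (Λ ⊗ₖ Λ₂) := by
      rw [hΛ, hΛ₂, hΛ₃, Matrix.diagonal_mul_diagonal,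
        Matrix.diagonal_kronecker_diagonal, Matrix.diagonal_kronecker_diagonal,
        ← Matrix.diagonal_smul, ← Matrix.diagonal_smul, Matrix.diagonal_add]
      refine congrArg Matrix.diagonal (funext fun q => ?_)
      obtain ⟨i, j⟩ := q
      simp only [Pi.add_apply, Pi.smul_apply, smul_eq_mul]
      have hi := hne i
      have hj := hne j
      have hij := hne2 i j
      field_simp
      ring
    have hMS : (U * Λ₂ * Uᵀ) ⊗ₖ S = (U ⊗ₖ U) * (Λ₂ ⊗ₖ Λ) * (Uᵀ ⊗ₖ Uᵀ) := by
      rw [hS, ← Matrix.mul_kronecker_mul, ← Matrix.mul_kronecker_mul]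
    have hSM2 : S ⊗ₖ (U * Λ₂ * Uᵀ) = (U ⊗ₖ U) * (Λ ⊗ₖ Λ₂) * (Uᵀ ⊗ₖ Uᵀ) := by
      rw [hS, ← Matrix.mul_kronecker_mul, ← Matrix.mul_kronecker_mul]
    have e3 : T * ((U ⊗ₖ U) * Matrix.diagonal (fun q : Fin m × Fin m => Λ₃ q.1 q.2)
          * (Uᵀ ⊗ₖ Uᵀ)) =
        (2⁻¹ : ℝ) • ((U * Λ₂ * Uᵀ) ⊗ₖ S) + (2⁻¹ : ℝ) • (S ⊗ₖ (U * Λ₂ * Uᵀ)) := by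
      calc T * ((U ⊗ₖ U) * Matrix.diagonal (fun q : Fin m × Fin m => Λ₃ q.1 q.2)
            * (Uᵀ ⊗ₖ Uᵀ))
          = (T * (U ⊗ₖ U)) * Matrix.diagonal (fun q : Fin m × Fin m => Λ₃ q.1 q.2)
            * (Uᵀ ⊗ₖ Uᵀ) := by simp only [Matrix.mul_assoc]
        _ = (U ⊗ₖ U) * (Matrix.diagonal (fun q : Fin m × Fin m => 2⁻¹ * τ q.1 + 2⁻¹ * τ q.2 + ρ)
            * Matrix.diagonal (fun q : Fin m × Fin m => Λ₃ q.1 q.2)) * (Uᵀ ⊗ₖ Uᵀ) := by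
            rw [hTK]; simp only [Matrix.mul_assoc]
        _ = (2⁻¹ : ℝ) • ((U * Λ₂ * Uᵀ) ⊗ₖ S) + (2⁻¹ : ℝ) • (S ⊗ₖ (U * Λ₂ * Uᵀ)) := by
            rw [hED3, hMS, hSM2, Matrix.mul_add, Matrix.add_mul, Matrix.mul_smul,
              Matrix.mul_smul, Matrix.smul_mul, Matrix.smul_mul]
    have e1 : T * ((U * Λ₂ * Uᵀ) ⊗ₖ (1 : Matrix (Fin p) (Fin p) ℝ)) =
        (2⁻¹ : ℝ) • ((S * (U * Λ₂ * Uᵀ)) ⊗ₖ (1 : Matrix (Fin p) (Fin p) ℝ))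
          + (2⁻¹ : ℝ) • ((U * Λ₂ * Uᵀ) ⊗ₖ S)
          + ρ • ((U * Λ₂ * Uᵀ) ⊗ₖ (1 : Matrix (Fin p) (Fin p) ℝ)) := by
      rw [hT]
      simp only [Matrix.add_mul, Matrix.smul_mul, ← Matrix.mul_kronecker_mul,
        Matrix.one_mul, Matrix.mul_one]
    have e2 : T * ((1 : Matrix (Fin p) (Fin p) ℝ) ⊗ₖ (U * Λ₂ * Uᵀ)) =
        (2⁻¹ : ℝ) • (S ⊗ₖ (U * Λ₂ * Uᵀ))
          + (2⁻¹ : ℝ) • ((1 : Matrix (Fin p) (Fin p) ℝ) ⊗ₖ (S * (U * Λ₂ * Uᵀ)))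
          + ρ • ((1 : Matrix (Fin p) (Fin p) ℝ) ⊗ₖ (U * Λ₂ * Uᵀ)) := by
      rw [hT]
      simp only [Matrix.add_mul, Matrix.smul_mul, ← Matrix.mul_kronecker_mul,
        Matrix.one_mul, Matrix.mul_one]
    have hST1 : S ⊗ₖ (1 : Matrix (Fin p) (Fin p) ℝ)
        = (S * (U * Λ₂ * Uᵀ)) ⊗ₖ (1 : Matrix (Fin p) (Fin p) ℝ)
          + (2 * ρ) • ((U * Λ₂ * Uᵀ) ⊗ₖ (1 : Matrix (Fin p) (Fin p) ℝ)) := by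
      conv_lhs => rw [hSM]
      rw [Matrix.add_kronecker, Matrix.smul_kronecker]
    have hST2 : (1 : Matrix (Fin p) (Fin p) ℝ) ⊗ₖ S
        = (1 : Matrix (Fin p) (Fin p) ℝ) ⊗ₖ (S * (U * Λ₂ * Uᵀ))
          + (2 * ρ) • ((1 : Matrix (Fin p) (Fin p) ℝ) ⊗ₖ (U * Λ₂ * Uᵀ)) := by
      conv_lhs => rw [hSM]
      rw [Matrix.kronecker_add, Matrix.kronecker_smul]
    have hRρ : R = ρ⁻¹ • ((1 : Matrix (Fin p × Fin p) (Fin p × Fin p) ℝ)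
        - (U * Λ₂ * Uᵀ) ⊗ₖ (1 : Matrix (Fin p) (Fin p) ℝ)
        - (1 : Matrix (Fin p) (Fin p) ℝ) ⊗ₖ (U * Λ₂ * Uᵀ)
        + (U ⊗ₖ U) * Matrix.diagonal (fun q : Fin m × Fin m => Λ₃ q.1 q.2)
          * (Uᵀ ⊗ₖ Uᵀ)) := by
      rw [hR, smul_add, smul_sub, smul_sub]
    rw [hRρ, Matrix.mul_smul]
    have hbig : T * ((1 : Matrix (Fin p × Fin p) (Fin p × Fin p) ℝ)
        - (U * Λ₂ * Uᵀ) ⊗ₖ (1 : Matrix (Fin p) (Fin p) ℝ)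
        - (1 : Matrix (Fin p) (Fin p) ℝ) ⊗ₖ (U * Λ₂ * Uᵀ)
        + (U ⊗ₖ U) * Matrix.diagonal (fun q : Fin m × Fin m => Λ₃ q.1 q.2)
          * (Uᵀ ⊗ₖ Uᵀ)) = ρ • (1 : Matrix (Fin p × Fin p) (Fin p × Fin p) ℝ) := by
      rw [Matrix.mul_add, Matrix.mul_sub, Matrix.mul_sub, Matrix.mul_one, e1, e2, e3,
        hT, hST1, hST2]
      module
    rw [hbig, smul_smul, inv_mul_cancel₀ hρ', one_smul]
  have key2 : R * T = 1 := mul_eq_one_comm.mp key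
  exact ⟨⟨⟨T, R, key, key2⟩, rfl⟩, Matrix.inv_eq_right_inv key, key, key2⟩
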